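/- Let q = q(n) ∈ (0,1) with q = o(1), let s_a ∈ (0,1] be a constant, let m = m(n) be a sequence of positive integers, and let Δ_x > 0 be a constant such that Δ_x m q s_a² ≥ 3 log n for all large n. Set x = Δ_x m q s_a² / log(1/q). If X_n is a Binomial(m, q² s_a²) random variable, then n² · P(X_n > x) → 0 as n → ∞. -/

import Mathlib

open MeasureTheory ProbabilityTheory Filter

noncomputable section

namespace AttrAlign

/-- The law of a `Binomial(m, r)` random variable, as a measure on `ℕ`
(the success probability `r` is clamped to `[0,1]`). -/
def binomMeasure (m : ℕ) (r : ℝ) : Measure ℕ :=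
  ((PMF.binomial (min (Real.toNNReal r) 1) (min_le_right _ _) m).map
    (fun k => (k : ℕ))).toMeasure

end AttrAlign

open AttrAlign

open scoped ENNReal NNReal

lemma tail_le (M : ℕ) (p x c : ℝ) (hp0 : 0 ≤ p) (hp1 : p ≤ 1) (hx : 0 ≤ x) (hc : 0 ≤ c) :
    (binomMeasure M p {k : ℕ | x < (k : ℝ)}).toReal ≤
      Real.exp ((M : ℝ) * p * Real.exp c - x * c) := by
  set S : Set ℕ := {k : ℕ | x < (k : ℝ)} with hS
  set p' : ℝ≥0 := min (Real.toNNReal p) 1 with hp'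
  have hp'eq : p' = Real.toNNReal p := min_eq_left (Real.toNNReal_le_one.mpr hp1)
  have h1 : binomMeasure M p =
      (PMF.map (fun a : Fin (M+1) => (a:ℕ))
        (PMF.binomial p' (min_le_right _ _) M)).toMeasure := by
    unfold binomMeasure
    congr 1
    exact PMF.map_id _
  have hmeas : (binomMeasure M p S) =
      (PMF.binomial p' (min_le_right _ _) M).toMeasure ((fun k : Fin (M+1) => (k:ℕ)) ⁻¹' S) := by
    rw [h1]
    exact PMF.toMeasure_map_apply _ _ _ Measurable.of_discrete MeasurableSet.of_discrete
  set B : ℝ := ∑ i ∈ Finset.range (M+1), (if x < (i:ℝ) then (M.choose i : ℝ) * p ^ i else 0)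
    with hB
  have hle : (binomMeasure M p S) ≤ ENNReal.ofReal B := by
    rw [hmeas, PMF.toMeasure_apply_fintype]
    have : ∀ a : Fin (M+1),
        Set.indicator ((fun k : Fin (M+1) => (k:ℕ)) ⁻¹' S) (PMF.binomial p' (min_le_right _ _) M) a
        ≤ if x < ((a:ℕ):ℝ) then ENNReal.ofReal ((M.choose (a:ℕ) : ℝ) * p ^ (a:ℕ)) else 0 := by
      intro a
      by_cases ha : x < ((a:ℕ):ℝ)
      · rw [Set.indicator_of_mem (by exact ha), if_pos ha, PMF.binomial_apply]
        trans ((p' : ℝ≥0∞) ^ (a:ℕ) * 1 * (M.choose (a:ℕ) : ℝ≥0∞))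
        · push_cast
          gcongr
          exact pow_le_one₀ (by positivity) tsub_le_self
        · rw [ENNReal.ofReal_mul (by positivity), ENNReal.ofReal_pow hp0,
            ENNReal.ofReal_natCast, mul_one, mul_comm, hp'eq]
          exact le_rfl
      · rw [Set.indicator_of_notMem (by exact ha), if_neg ha]
    calc ∑ a : Fin (M+1), Set.indicator ((fun k : Fin (M+1) => (k:ℕ)) ⁻¹' S)
            (PMF.binomial p' (min_le_right _ _) M) a
        ≤ ∑ a : Fin (M+1),
            (if x < ((a:ℕ):ℝ) then ENNReal.ofReal ((M.choose (a:ℕ) : ℝ) * p ^ (a:ℕ)) else 0) :=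
          Finset.sum_le_sum (fun a _ => this a)
      _ = ∑ a : Fin (M+1),
            ENNReal.ofReal (if x < ((a:ℕ):ℝ) then (M.choose (a:ℕ) : ℝ) * p ^ (a:ℕ) else 0) := by
          refine Finset.sum_congr rfl fun a _ => ?_
          split <;> simp
      _ = ENNReal.ofReal B := by
          rw [hB, ← Fin.sum_univ_eq_sum_range (fun i => if x < (i:ℝ) then (M.choose i:ℝ)*p^i else 0)]
          rw [ENNReal.ofReal_sum_of_nonneg]
          intro a _
          split
          · positivity
          · exact le_refl _
  have hBle : B ≤ Real.exp ((M : ℝ) * p * Real.exp c - x * c) := by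
    set y : ℝ := p * Real.exp c with hy
    have hy0 : 0 ≤ y := by positivity
    have step1 : B ≤ Real.exp (-(x*c)) * ∑ i ∈ Finset.range (M+1),
        (M.choose i : ℝ) * y ^ i := by
      rw [Finset.mul_sum]
      refine Finset.sum_le_sum fun i _ => ?_
      by_cases hi : x < (i:ℝ)
      · rw [if_pos hi]
        have h1 : (1:ℝ) ≤ Real.exp (-(x*c)) * Real.exp (c * i) := by
          rw [← Real.exp_add]
          refine Real.one_le_exp (by nlinarith [hi.le])
        have h2 : y ^ i = p ^ i * Real.exp (c * i) := by
          rw [hy, mul_pow, ← Real.exp_nat_mul, mul_comm (i:ℝ) c]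
        calc (M.choose i : ℝ) * p ^ i
            = 1 * ((M.choose i : ℝ) * p ^ i) := by ring
          _ ≤ (Real.exp (-(x*c)) * Real.exp (c*i)) * ((M.choose i : ℝ) * p ^ i) := by
              apply mul_le_mul_of_nonneg_right h1 (by positivity)
          _ = Real.exp (-(x*c)) * ((M.choose i : ℝ) * y ^ i) := by rw [h2]; ring
      · rw [if_neg hi]; positivity
    have step2 : ∑ i ∈ Finset.range (M+1), (M.choose i : ℝ) * y ^ i = (y + 1) ^ M := by
      rw [add_pow]
      refine Finset.sum_congr rfl fun i _ => ?_
      simp [mul_comm]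
    have step3 : (y + 1) ^ M ≤ Real.exp ((M:ℝ) * y) := by
      calc (y+1)^M ≤ (Real.exp y)^M :=
            pow_le_pow_left₀ (by linarith) (Real.add_one_le_exp y) M
        _ = Real.exp ((M:ℝ) * y) := by rw [← Real.exp_nat_mul]
    calc B ≤ Real.exp (-(x*c)) * ((y+1)^M) := by rw [← step2]; exact step1
      _ ≤ Real.exp (-(x*c)) * Real.exp ((M:ℝ)*y) := by
          apply mul_le_mul_of_nonneg_left step3 (Real.exp_nonneg _)
      _ = Real.exp ((M : ℝ) * p * Real.exp c - x * c) := by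
          rw [← Real.exp_add, hy]; ring_nf
  refine ENNReal.toReal_le_of_le_ofReal (Real.exp_nonneg _) ?_
  exact hle.trans (ENNReal.ofReal_le_ofReal hBle)


/-- Upper tail bound for Step 1 of Algorithm `AttrRich`: with
`x = Δ_x m q s_a² / log(1/q)` and `X_n ∼ Binomial(m, q² s_a²)`, if `q = o(1)` and
`Δ_x m q s_a² ≥ 3 log n` for all large `n`, then `n² P(X_n > x) → 0`. -/
theorem binomial_upper_tail_attrRich
    (q : ℕ → ℝ) (m : ℕ → ℕ) (sa Δx : ℝ)
    (hq01 : ∀ n, 0 < q n ∧ q n < 1)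
    (hq : Tendsto q atTop (nhds 0))
    (hsa : 0 < sa) (hsa1 : sa ≤ 1)
    (hm : ∀ n, 0 < m n)
    (hΔx : 0 < Δx)
    (hΔx' : ∀ᶠ n : ℕ in atTop, 3 * Real.log n ≤ Δx * ((m n : ℝ) * q n * sa ^ 2)) :
    Tendsto (fun n : ℕ => (n : ℝ) ^ 2 *
        (binomMeasure (m n) ((q n) ^ 2 * sa ^ 2)
          {k : ℕ | Δx * ((m n : ℝ) * q n * sa ^ 2) / Real.log (1 / q n) < (k : ℝ)}).toReal)
      atTop (nhds 0) := by
  -- log(1/q n) → ∞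
  have hqpos : Tendsto q atTop (nhdsWithin 0 (Set.Ioi 0)) :=
    tendsto_nhdsWithin_iff.mpr ⟨hq, Eventually.of_forall fun n => (hq01 n).1⟩
  have hlogq : Tendsto (fun n => Real.log (q n)) atTop atBot :=
    Real.tendsto_log_nhdsGT_zero.comp hqpos
  have hL : Tendsto (fun n => Real.log (1 / q n)) atTop atTop := by
    have := tendsto_neg_atBot_atTop.comp hlogq
    refine this.congr fun n => ?_
    simp [one_div, Real.log_inv, Function.comp]
  have hE2 : ∀ᶠ n : ℕ in atTop, 10 * Real.log (10 / Δx) ≤ Real.log (1 / q n) :=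
    hL.eventually_ge_atTop _
  -- the dominating sequence
  have hg : Tendsto (fun n : ℕ => Real.exp (-(2/5) * Real.log n)) atTop (nhds 0) := by
    have hlogn : Tendsto (fun n : ℕ => Real.log n) atTop atTop :=
      Real.tendsto_log_atTop.comp tendsto_natCast_atTop_atTop
    have : Tendsto (fun n : ℕ => -(2/5) * Real.log n) atTop atBot :=
      hlogn.const_mul_atTop_of_neg (by norm_num)
    exact Real.tendsto_exp_atBot.comp this
  refine squeeze_zero' (Eventually.of_forall fun n =>
    mul_nonneg (by positivity) ENNReal.toReal_nonneg) ?_ hg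
  filter_upwards [hΔx', hE2, eventually_ge_atTop 1] with n h1 h2 h3
  have hq0 := (hq01 n).1
  have hq1 := (hq01 n).2
  set L : ℝ := Real.log (1 / q n) with hLdef
  have hL0 : 0 < L := Real.log_pos (by rw [lt_div_iff₀ hq0]; linarith)
  set A : ℝ := (m n : ℝ) * q n * sa ^ 2 with hA
  have hA0 : 0 ≤ A := by positivity
  set c : ℝ := (9/10) * L with hc
  have hc0 : 0 ≤ c := by positivity
  set p : ℝ := q n ^ 2 * sa ^ 2 with hp
  have hp0 : 0 ≤ p := by positivity
  have hp1 : p ≤ 1 := by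
    have h4 : q n ^ 2 ≤ 1 := pow_le_one₀ hq0.le hq1.le
    have h5 : sa ^ 2 ≤ 1 := pow_le_one₀ hsa.le hsa1
    nlinarith
  set x : ℝ := Δx * A / L with hxdef
  have hx0 : 0 ≤ x := div_nonneg (by positivity) hL0.le
  have htail := tail_le (m n) p x c hp0 hp1 hx0 hc0
  -- exponent bound
  have exc : x * c = (9/10) * (Δx * A) := by
    rw [hxdef, hc]
    field_simp
  have hqe : q n * Real.exp c ≤ Δx / 10 := by
    have hlog : Real.log (q n) = -L := by
      rw [hLdef, one_div, Real.log_inv, neg_neg]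
    have : q n * Real.exp c = Real.exp (-(L/10)) := by
      rw [← Real.exp_log hq0, ← Real.exp_add, hlog, hc]; ring_nf
    rw [this]
    have h6 : -(L/10) ≤ Real.log (Δx / 10) := by
      have : Real.log (10 / Δx) = -Real.log (Δx / 10) := by
        rw [← Real.log_inv, inv_div]
      linarith [h2, this ▸ h2]
    calc Real.exp (-(L/10)) ≤ Real.exp (Real.log (Δx/10)) := Real.exp_le_exp.mpr h6
      _ = Δx / 10 := Real.exp_log (by positivity)
  have hexp : (m n : ℝ) * p * Real.exp c - x * c ≤ -(12/5) * Real.log n := by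
    have e2 : (m n : ℝ) * p * Real.exp c = A * (q n * Real.exp c) := by
      rw [hp, hA]; ring
    have e3 : (m n : ℝ) * p * Real.exp c ≤ A * (Δx / 10) := by
      rw [e2]; exact mul_le_mul_of_nonneg_left hqe hA0
    rw [exc]
    nlinarith [h1]
  have hn2 : (n:ℝ) ^ 2 = Real.exp (2 * Real.log n) := by
    have hn0 : (0:ℝ) < n := by exact_mod_cast h3
    rw [two_mul, Real.exp_add, Real.exp_log hn0]; ring
  calc (n : ℝ) ^ 2 * (binomMeasure (m n) ((q n) ^ 2 * sa ^ 2)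
          {k : ℕ | Δx * ((m n : ℝ) * q n * sa ^ 2) / Real.log (1 / q n) < (k : ℝ)}).toReal
      ≤ (n : ℝ) ^ 2 * Real.exp ((m n : ℝ) * p * Real.exp c - x * c) := by
        apply mul_le_mul_of_nonneg_left _ (by positivity)
        exact htail
    _ ≤ (n : ℝ) ^ 2 * Real.exp (-(12/5) * Real.log n) :=
        mul_le_mul_of_nonneg_left (Real.exp_le_exp.mpr hexp) (by positivity)
    _ = Real.exp (-(2/5) * Real.log n) := by
        rw [hn2, ← Real.exp_add]; ring_nf
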